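/- Let G be a comparability graph with modular partition P = {M₁, …, M_k}. Then R^p(G) = max{R^p(G/P), R^p(G[M₁]), …, R^p(G[M_k])}. -/

import Mathlib

section Defs

variable {V : Type*}

/-- Two letters alternate in a word: the subword over `{a,b}` has no equal consecutive letters. -/
def Alternates [DecidableEq V] (w : List V) (a b : V) : Prop :=
  (w.filter (fun x => decide (x = a ∨ x = b))).Chain' (· ≠ ·)

/-- A word over the vertex set represents a graph: every vertex occurs, and two distinct
vertices are adjacent iff they alternate in the word. -/
def Represents [DecidableEq V] (w : List V) (G : SimpleGraph V) : Prop :=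
  (∀ v : V, v ∈ w) ∧ ∀ a b : V, a ≠ b → (G.Adj a b ↔ Alternates w a b)

def WordRepresentable [DecidableEq V] (G : SimpleGraph V) : Prop :=
  ∃ w : List V, Represents w G

/-- Every letter occurs exactly `k` times. -/
def IsKUniform [DecidableEq V] (w : List V) (k : ℕ) : Prop :=
  ∀ v : V, w.count v = k

/-- `k` is the representation number of `G`. -/
def RepNumIs [DecidableEq V] (G : SimpleGraph V) (k : ℕ) : Prop :=
  IsLeast {n : ℕ | ∃ w : List V, IsKUniform w n ∧ Represents w G} k

/-- `p` is a permutation of the vertex set (as a list). -/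
def IsPermOn (p : List V) : Prop := p.Nodup ∧ ∀ v : V, v ∈ p

/-- `G` is representable by a concatenation of `k` permutations of its vertex set. -/
def PermRepresents [DecidableEq V] (G : SimpleGraph V) (k : ℕ) : Prop :=
  ∃ ps : List (List V), ps.length = k ∧ (∀ p ∈ ps, IsPermOn p) ∧ Represents ps.flatten G

/-- `k` is the permutation-representation number of `G`. -/
def PrnIs [DecidableEq V] (G : SimpleGraph V) (k : ℕ) : Prop :=
  IsLeast {n : ℕ | PermRepresents G n} k

/-- A comparability graph: a graph admitting a transitive orientation of its edges. -/
def IsComparability (G : SimpleGraph V) : Prop :=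
  ∃ lt : V → V → Prop, Transitive lt ∧ (∀ a b, lt a b → G.Adj a b) ∧
    (∀ a b, G.Adj a b → (lt a b ↔ ¬ lt b a))

/-- A module: every outside vertex is adjacent to all of `M` or to none of `M`. -/
def IsModule (G : SimpleGraph V) (M : Set V) : Prop :=
  ∀ x ∉ M, (∀ m ∈ M, G.Adj x m) ∨ (∀ m ∈ M, ¬ G.Adj x m)

end Defs

/-- The graph obtained from `G` by replacing the vertex `a` with the module `M`. -/
def substGraph {W V' : Type*} (G : SimpleGraph W) (a : W) (M : SimpleGraph V') :
    SimpleGraph ({x : W // x ≠ a} ⊕ V') where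
  Adj x y :=
    match x, y with
    | Sum.inl u, Sum.inl v => G.Adj u.1 v.1
    | Sum.inl u, Sum.inr _ => G.Adj u.1 a
    | Sum.inr _, Sum.inl v => G.Adj a v.1
    | Sum.inr u, Sum.inr v => M.Adj u v
  symm := by
    refine ⟨?_⟩
    rintro (u | u) (v | v) h
    · exact h.symm
    · exact h.symm
    · exact h.symm
    · exact h.symm
  loopless := by
    refine ⟨?_⟩
    rintro (u | u) h
    · exact G.irrefl h
    · exact M.irrefl h

/-- The quotient graph of a modular partition: parts are adjacent iff completely adjacent. -/
def quotientGraph {V : Type*} (G : SimpleGraph V) {n : ℕ} (Mod : Fin n → Set V) :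
    SimpleGraph (Fin n) where
  Adj i j := i ≠ j ∧ ∀ a ∈ Mod i, ∀ b ∈ Mod j, G.Adj a b
  symm := by
    refine ⟨?_⟩
    rintro i j ⟨hij, h⟩
    exact ⟨hij.symm, fun a ha b hb => (h b hb a ha).symm⟩
  loopless := by refine ⟨?_⟩; rintro i ⟨h, _⟩; exact h rfl

/-- The lexicographical product of two graphs. -/
def lexProd {V V' : Type*} (G : SimpleGraph V) (G' : SimpleGraph V') :
    SimpleGraph (V × V') where
  Adj x y := G.Adj x.1 y.1 ∨ (x.1 = y.1 ∧ G'.Adj x.2 y.2)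
  symm := by
    refine ⟨?_⟩
    rintro ⟨a, a'⟩ ⟨b, b'⟩ (h | ⟨h1, h2⟩)
    · exact Or.inl h.symm
    · exact Or.inr ⟨h1.symm, h2.symm⟩
  loopless := by
    refine ⟨?_⟩
    rintro ⟨a, a'⟩ (h | ⟨_, h⟩)
    · exact G.irrefl h
    · exact G'.irrefl h

namespace Stmt18
set_option linter.unusedSectionVars false
variable {V : Type*} [DecidableEq V]

def pr (a b : V) : V → Bool := fun x => decide (x = a ∨ x = b)

lemma pr_eq {a b x : V} : pr a b x = true ↔ (x = a ∨ x = b) := by simp [pr]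

lemma pr_comm (a b : V) : pr a b = pr b a := by
  funext x; simp [pr, or_comm]

lemma alternates_def {w : List V} {a b : V} :
    Alternates w a b ↔ (w.filter (pr a b)).Chain' (· ≠ ·) := Iff.rfl

lemma pair_shape {a b : V} (hab : a ≠ b) {l : List V} (hn : l.Nodup)
    (ha : a ∈ l) (hb : b ∈ l) (hsub : ∀ x ∈ l, x = a ∨ x = b) :
    l = [a, b] ∨ l = [b, a] := by
  have hfin : l.toFinset = {a, b} := by
    apply Finset.Subset.antisymm
    · intro x hx
      rcases hsub x (List.mem_toFinset.mp hx) with rfl | rfl <;> simp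
    · intro x hx
      rcases Finset.mem_insert.mp hx with rfl | hx
      · exact List.mem_toFinset.mpr ha
      · rcases Finset.mem_singleton.mp hx with rfl
        exact List.mem_toFinset.mpr hb
  have hlen : l.length = 2 := by
    have h1 := List.toFinset_card_of_nodup hn
    rw [hfin] at h1
    rw [← h1, Finset.card_insert_of_notMem (by simp [hab]), Finset.card_singleton]
  obtain ⟨x, y, rfl⟩ := List.length_eq_two.mp hlen
  have hxy : x ≠ y := by simpa using hn
  rcases hsub x (by simp) with rfl | rfl
  · rcases hsub y (by simp) with rfl | rfl
    · exact absurd rfl hxy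
    · exact Or.inl rfl
  · rcases hsub y (by simp) with rfl | rfl
    · exact Or.inr rfl
    · exact absurd rfl hxy

lemma filter_perm {p : List V} (hp : IsPermOn p) {a b : V} (hab : a ≠ b) :
    p.filter (pr a b) = [a, b] ∨ p.filter (pr a b) = [b, a] := by
  apply pair_shape hab (hp.1.filter _)
  · exact List.mem_filter.mpr ⟨hp.2 a, by simp [pr]⟩
  · exact List.mem_filter.mpr ⟨hp.2 b, by simp [pr]⟩
  · intro x hx
    exact pr_eq.mp (List.mem_filter.mp hx).2

lemma chain'_flatten_pairs {a b : V} (hab : a ≠ b) :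
    ∀ L : List (List V), (∀ l ∈ L, l = [a, b] ∨ l = [b, a]) →
    (L.flatten.Chain' (· ≠ ·) ↔ L.Chain' (· = ·))
  | [], _ => by simp [List.Chain']
  | [p], h => by
      rcases h p (by simp) with rfl | rfl <;>
        simp [List.Chain', List.isChain_cons_cons, hab, hab.symm]
  | p :: q :: L, h => by
      have ih := chain'_flatten_pairs hab (q :: L)
        (fun l hl => h l (List.mem_cons_of_mem _ hl))
      rcases h p (by simp) with rfl | rfl <;> rcases h q (by simp) with rfl | rfl <;>
      · simp only [List.Chain', List.flatten_cons, List.cons_append, List.nil_append] at ih ⊢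
        simp only [List.isChain_cons_cons, hab, hab.symm, ne_eq, not_false_eq_true, true_and] at ih ⊢
        simp [ih, hab, hab.symm, List.isChain_cons_cons]

lemma altIff {ps : List (List V)} (hps : ∀ p ∈ ps, IsPermOn p) {a b : V} (hab : a ≠ b) :
    Alternates ps.flatten a b ↔ (ps.map (·.filter (pr a b))).Chain' (· = ·) := by
  rw [alternates_def, List.filter_flatten]
  exact chain'_flatten_pairs hab _ (by
    intro l hl
    obtain ⟨p, hp, rfl⟩ := List.mem_map.mp hl
    exact filter_perm (hps p hp) hab)

lemma chain'_eq_pad {α : Type*} (x : α) (l : List α) :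
    ∀ j : ℕ, (List.replicate j x ++ x :: l).Chain' (· = ·) ↔ (x :: l).Chain' (· = ·)
  | 0 => by simp
  | j + 1 => by
    have ih := chain'_eq_pad x l j
    rw [List.replicate_succ, List.cons_append, List.Chain', List.isChain_cons]
    constructor
    · intro h; exact ih.mp h.2
    · intro h
      refine ⟨?_, ih.mpr h⟩
      intro y hy
      have hh : (List.replicate j x ++ x :: l).head? = some x := by
        cases j with
        | zero => simp
        | succ j => simp [List.replicate_succ]
      rw [hh] at hy
      simp only [Option.mem_some_iff] at hy
      exact hy

lemma flatMap_single {α : Type*} {g : α → List V} {i : α} :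
    ∀ {l : List α}, l.Nodup → i ∈ l → (∀ m ∈ l, m ≠ i → g m = []) → l.flatMap g = g i
  | [], _, hi, _ => absurd hi List.not_mem_nil
  | x :: l, hn, hi, hg => by
    rcases List.mem_cons.mp hi with rfl | hi
    · have : l.flatMap g = [] := by
        apply List.flatMap_eq_nil_iff.mpr
        intro m hm
        exact hg m (List.mem_cons_of_mem _ hm) (fun h => (List.nodup_cons.mp hn).1 (h ▸ hm))
      simp [List.flatMap_cons, this]
    · have hxi : x ≠ i := fun h => (List.nodup_cons.mp hn).1 (h ▸ hi)
      have := flatMap_single (List.nodup_cons.mp hn).2 hi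
        (fun m hm hmi => hg m (List.mem_cons_of_mem _ hm) hmi)
      simp [List.flatMap_cons, hg x (by simp) hxi, this]

lemma flatMap_eq_map_filter {α : Type*} {g : α → List V} {p : α → Bool} {h : α → V} :
    ∀ {l : List α}, (∀ m ∈ l, g m = if p m then [h m] else []) →
      l.flatMap g = (l.filter p).map h
  | [], _ => rfl
  | x :: l, hg => by
    have ih := flatMap_eq_map_filter (g := g) (p := p) (h := h)
      (fun m hm => hg m (List.mem_cons_of_mem _ hm))
    rw [List.flatMap_cons, hg x (by simp), ih]
    by_cases hx : p x <;> simp [hx]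

lemma filter_single {a b : V} :
    ∀ {l : List V}, l.Nodup → a ∈ l → b ∉ l → l.filter (pr a b) = [a]
  | [], _, ha, _ => absurd ha List.not_mem_nil
  | x :: l, hn, ha, hb => by
    rcases List.mem_cons.mp ha with h | ha
    · subst h
      have h1 : l.filter (pr a b) = [] := by
        apply List.filter_eq_nil_iff.mpr
        intro y hy hpy
        rcases pr_eq.mp hpy with rfl | rfl
        · exact (List.nodup_cons.mp hn).1 hy
        · exact hb (List.mem_cons_of_mem _ hy)
      have hx : pr a b a = true := pr_eq.mpr (Or.inl rfl)
      simp [List.filter_cons, hx, h1]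
    · have hxa : x ≠ a := fun h => (List.nodup_cons.mp hn).1 (h ▸ ha)
      have hxb : x ≠ b := fun h => hb (h ▸ (List.mem_cons_self : x ∈ x :: l))
      have hx : pr a b x = false := by simp [pr, hxa, hxb]
      have ih := filter_single (List.nodup_cons.mp hn).2 ha (fun h => hb (List.mem_cons_of_mem _ h))
      simp [List.filter_cons, hx, ih]

lemma chain'_iff_of_iff {α : Type*} {R S : α → α → Prop} (h : ∀ x y, R x y ↔ S x y)
    {l : List α} : l.Chain' R ↔ l.Chain' S := by
  have : R = S := by funext x y; exact propext (h x y)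
  rw [this]

lemma map_eq_finRange_map {α β : Type*} {N : ℕ} {l : List α} (hl : l.length = N)
    (g : Fin N → α) (hg : ∀ t : Fin N, g t = l[(t : ℕ)]'(by rw [hl]; exact t.isLt))
    (F : α → β) : l.map F = (List.finRange N).map (fun t => F (g t)) := by
  apply List.ext_getElem
  · simp [hl]
  · intro i h1 h2
    simp only [List.getElem_map, List.getElem_finRange]
    rw [hg]
    congr 1

lemma partialInv_mem {W : Type*} {φ : W → V} {v : V} {w : W}
    (h : Function.partialInv φ v = some w) : φ w = v := by
  unfold Function.partialInv at h
  split at h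
  · next he =>
      have := Classical.choose_spec he
      cases h
      exact this
  · cases h

lemma res_filter {W : Type*} [DecidableEq W] {φ : W → V} (hφ : Function.Injective φ)
    (x y : W) : ∀ l : List V,
    ((l.filterMap (Function.partialInv φ)).filter (pr x y)).map φ
      = l.filter (pr (φ x) (φ y))
  | [] => rfl
  | v :: l => by
    have ih := res_filter hφ x y l
    cases hv : Function.partialInv φ v with
    | none =>
      have hvx : v ≠ φ x := by
        rintro rfl; rw [Function.partialInv_left hφ] at hv; cases hv
      have hvy : v ≠ φ y := by
        rintro rfl; rw [Function.partialInv_left hφ] at hv; cases hv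
      have hpv : pr (φ x) (φ y) v = false := by simp [pr, hvx, hvy]
      simp [List.filterMap_cons, hv, List.filter_cons, hpv, ih]
    | some w =>
      have hw : φ w = v := partialInv_mem hv
      by_cases hpw : pr x y w = true
      · have hpv : pr (φ x) (φ y) v = true := by
          rcases pr_eq.mp hpw with rfl | rfl
          · exact pr_eq.mpr (Or.inl hw.symm)
          · exact pr_eq.mpr (Or.inr hw.symm)
        simp [List.filterMap_cons, hv, List.filter_cons, hpv, hpw, ih, hw]
      · have hpv : pr (φ x) (φ y) v = false := by
          rw [Bool.eq_false_iff]
          intro hc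
          apply hpw
          rcases pr_eq.mp hc with hc | hc
          · exact pr_eq.mpr (Or.inl (hφ (hw.trans hc)))
          · exact pr_eq.mpr (Or.inr (hφ (hw.trans hc)))
        simp [List.filterMap_cons, hv, List.filter_cons, hpv, hpw, ih]

lemma alternates_res {W : Type*} [DecidableEq W] {φ : W → V} (hφ : Function.Injective φ)
    (x y : W) (w : List V) :
    Alternates (w.filterMap (Function.partialInv φ)) x y ↔ Alternates w (φ x) (φ y) := by
  rw [alternates_def, alternates_def, ← res_filter hφ x y w, List.Chain', List.Chain', List.isChain_map]
  exact chain'_iff_of_iff (fun a b => by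
    constructor
    · intro h he; exact h (hφ he)
    · intro h he; exact h (congrArg φ he))

lemma transfer {W : Type*} [DecidableEq W] {G : SimpleGraph V} {H : SimpleGraph W}
    {φ : W → V} (hφ : Function.Injective φ)
    (hadj : ∀ x y : W, x ≠ y → (H.Adj x y ↔ G.Adj (φ x) (φ y)))
    {m : ℕ} : PermRepresents G m → PermRepresents H m := by
  rintro ⟨ps, hlen, hperm, hmem, halt⟩
  have hkey : ∀ a a' : V, ∀ b ∈ Function.partialInv φ a, b ∈ Function.partialInv φ a' → a = a' := by
    intro a a' b hb hb'
    rw [← partialInv_mem hb, ← partialInv_mem hb']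
  have hflat : (ps.map (·.filterMap (Function.partialInv φ))).flatten
      = ps.flatten.filterMap (Function.partialInv φ) :=
    List.filterMap_flatten.symm
  refine ⟨ps.map (·.filterMap (Function.partialInv φ)), by simp [hlen], ?_, ?_, ?_⟩
  · intro p' hp'
    obtain ⟨p, hp, rfl⟩ := List.mem_map.mp hp'
    constructor
    · exact List.Nodup.filterMap hkey (hperm p hp).1
    · intro x
      exact List.mem_filterMap.mpr ⟨φ x, (hperm p hp).2 (φ x), Function.partialInv_left hφ x⟩
  · intro x
    rw [hflat]
    exact List.mem_filterMap.mpr ⟨φ x, hmem (φ x), Function.partialInv_left hφ x⟩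
  · intro x y hxy
    rw [hflat, alternates_res hφ x y, hadj x y hxy]
    exact halt (φ x) (φ y) (fun h => hxy (hφ h))

lemma pad {W : Type*} [DecidableEq W] {H : SimpleGraph W} {k m : ℕ}
    (hk : PermRepresents H k) (hkm : k ≤ m) : PermRepresents H m := by
  obtain ⟨ps, hlen, hperm, hmem, halt⟩ := hk
  cases ps with
  | nil =>
    have hempty : ∀ v : W, False := fun v => by simpa using hmem v
    refine ⟨List.replicate m [], by simp, ?_, ?_, ?_⟩
    · intro p hp
      rw [List.eq_of_mem_replicate hp]
      exact ⟨List.nodup_nil, fun v => (hempty v).elim⟩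
    · intro v; exact (hempty v).elim
    · intro a b hab; exact (hempty a).elim
  | cons p rest =>
    have hperm' : ∀ q ∈ List.replicate (m - k) p ++ p :: rest, IsPermOn q := by
      intro q hq
      rcases List.mem_append.mp hq with h | h
      · rw [List.eq_of_mem_replicate h]; exact hperm p (by simp)
      · exact hperm q h
    refine ⟨List.replicate (m - k) p ++ p :: rest, ?_, hperm', ?_, ?_⟩
    · simp only [List.length_append, List.length_replicate, List.length_cons]
      simp only [List.length_cons] at hlen
      omega
    · intro v
      rw [List.flatten_append]
      exact List.mem_append_right _ (hmem v)
    · intro a b hab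
      rw [halt a b hab, altIff hperm hab, altIff hperm' hab]
      rw [List.map_append, List.map_replicate, List.map_cons]
      exact (chain'_eq_pad _ _ _).symm

lemma chain'_congr_mem {α : Type*} {R S : α → α → Prop} :
    ∀ {l : List α}, (∀ x ∈ l, ∀ y ∈ l, (R x y ↔ S x y)) → (l.Chain' R ↔ l.Chain' S)
  | [], _ => by simp [List.Chain']
  | [x], _ => by simp [List.Chain']
  | x :: y :: l, h => by
    have ih := chain'_congr_mem (l := y :: l)
      (fun u hu v hv => h u (List.mem_cons_of_mem _ hu) v (List.mem_cons_of_mem _ hv))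
    simp only [List.Chain'] at ih ⊢
    rw [List.isChain_cons_cons, List.isChain_cons_cons, ih, h x (by simp) y (by simp)]

lemma chain'_eq_map_iff {α β : Type*} (f : α → β) (hf : Function.Injective f)
    (L : List (List α)) :
    (L.map (List.map f)).Chain' (· = ·) ↔ L.Chain' (· = ·) := by
  rw [List.Chain', List.isChain_map]
  exact chain'_iff_of_iff (fun x y =>
    ⟨fun h => List.map_injective_iff.mpr hf h, fun h => h ▸ rfl⟩)

end Stmt18

/-- for a comparability graph with modular partition `{M₁, …, Mₙ}`,
`R^p(G) = max {R^p(G/P), R^p(G[M₁]), …, R^p(G[Mₙ])}`. -/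
theorem stmt18 {V : Type*} [DecidableEq V] [Fintype V] (G : SimpleGraph V)
    (hcomp : IsComparability G) {n : ℕ} (Mod : Fin n → Set V)
    (hne : ∀ i, (Mod i).Nonempty)
    (hdisj : ∀ i j, i ≠ j → Disjoint (Mod i) (Mod j))
    (hcov : ∀ v : V, ∃ i, v ∈ Mod i)
    (hmod : ∀ i, IsModule G (Mod i))
    (k₀ : ℕ) (ks : Fin n → ℕ)
    (hq : PrnIs (quotientGraph G Mod) k₀)
    (hp : ∀ i, PrnIs (G.induce (Mod i)) (ks i)) :
    PrnIs G (max k₀ (Finset.univ.sup ks)) := by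
  classical
  open Stmt18 in
  -- the module-index function
  have hfm : ∀ v : V, v ∈ Mod ((hcov v).choose) := fun v => (hcov v).choose_spec
  set f : V → Fin n := fun v => (hcov v).choose with hfdef
  have hfuniq : ∀ (v : V) (i : Fin n), v ∈ Mod i → f v = i := by
    intro v i hv
    by_contra hne'
    exact Set.disjoint_left.mp (hdisj _ _ hne') (hfm v) hv
  have hcross : ∀ (i j : Fin n), i ≠ j → ∀ a ∈ Mod i, ∀ b ∈ Mod j,
      (G.Adj a b ↔ (quotientGraph G Mod).Adj i j) := by
    intro i j hij a ha b hb
    constructor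
    · intro hadj
      refine ⟨hij, ?_⟩
      intro a' ha' b' hb'
      have hanotj : a ∉ Mod j := fun h => Set.disjoint_left.mp (hdisj i j hij) ha h
      have h1 : ∀ m ∈ Mod j, G.Adj a m := by
        rcases hmod j a hanotj with h | h
        · exact h
        · exact absurd hadj (h b hb)
      have hb'2 : G.Adj a b' := h1 b' hb'
      have hbnoti : b' ∉ Mod i := fun h => Set.disjoint_left.mp (hdisj i j hij) h hb'
      rcases hmod i b' hbnoti with h | h
      · exact (h a' ha').symm
      · exact absurd hb'2.symm (h a ha)
    · rintro ⟨_, h⟩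
      exact h a ha b hb
  set r : Fin n → V := fun i => (hne i).choose with hrdef
  have hr : ∀ i, r i ∈ Mod i := fun i => (hne i).choose_spec
  have hrinj : Function.Injective r := by
    intro i j hij
    by_contra hne'
    exact Set.disjoint_left.mp (hdisj i j hne') (hr i) (hij ▸ hr j)
  constructor
  · -- upper bound: the construction
    show PermRepresents G (max k₀ (Finset.univ.sup ks))
    set N := max k₀ (Finset.univ.sup ks) with hNdef
    obtain ⟨qs, hqlen, hqperm, hqmem, hqalt⟩ := pad hq.1 (le_max_left _ _)
    have hws : ∀ i : Fin n, ∃ w : List (List (Mod i)),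
        w.length = N ∧ (∀ p ∈ w, IsPermOn p) ∧ Represents w.flatten (G.induce (Mod i)) :=
      fun i => pad (hp i).1
        (le_trans (Finset.le_sup (Finset.mem_univ i)) (le_max_right _ _))
    choose ws hwlen hwperm hwrep using hws
    obtain ⟨qfun, hqfun⟩ : ∃ qf : Fin N → List (Fin n),
        ∀ t : Fin N, qf t = qs[(t : ℕ)]'(by rw [hqlen]; exact t.isLt) :=
      ⟨fun t => qs[(t : ℕ)]'(by rw [hqlen]; exact t.isLt), fun t => rfl⟩
    obtain ⟨wfun, hwfun⟩ : ∃ wf : (i : Fin n) → Fin N → List (Mod i),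
        ∀ i t, wf i t = (ws i)[(t : ℕ)]'(by rw [hwlen i]; exact t.isLt) :=
      ⟨fun i t => (ws i)[(t : ℕ)]'(by rw [hwlen i]; exact t.isLt), fun i t => rfl⟩
    have hqfunperm : ∀ t, IsPermOn (qfun t) := fun t => by
      rw [hqfun t]; exact hqperm _ (List.getElem_mem _)
    have hwfunperm : ∀ i t, IsPermOn (wfun i t) := fun i t => by
      rw [hwfun i t]; exact hwperm i _ (List.getElem_mem _)
    set B : Fin n → Fin N → List V :=
      fun i t => (wfun i t).map Subtype.val with hBdef
    set P : Fin N → List V := fun t => (qfun t).flatMap (fun i => B i t) with hPdef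
    have hBmem : ∀ i t (v : V), v ∈ B i t ↔ v ∈ Mod i := by
      intro i t v
      constructor
      · intro hv
        obtain ⟨x, _, rfl⟩ := List.mem_map.mp hv
        exact x.2
      · intro hv
        exact List.mem_map.mpr ⟨⟨v, hv⟩, (hwfunperm i t).2 ⟨v, hv⟩, rfl⟩
    have hBnd : ∀ i t, (B i t).Nodup :=
      fun i t => (hwfunperm i t).1.map Subtype.val_injective
    have hPperm : ∀ t, IsPermOn (P t) := by
      intro t
      constructor
      · apply List.nodup_flatMap.mpr
        refine ⟨fun i _ => hBnd i t, ?_⟩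
        apply List.Pairwise.imp ?_ (hqfunperm t).1
        intro i j hij v hvi hvj
        exact hij (((hfuniq v i ((hBmem i t v).mp hvi)).symm).trans
          (hfuniq v j ((hBmem j t v).mp hvj)))
      · intro v
        exact List.mem_flatMap.mpr ⟨f v, (hqfunperm t).2 (f v), (hBmem (f v) t v).mpr (hfm v)⟩
    have hPsperm : ∀ p ∈ (List.finRange N).map P, IsPermOn p := by
      intro p hp'
      obtain ⟨t, _, rfl⟩ := List.mem_map.mp hp'
      exact hPperm t
    refine ⟨(List.finRange N).map P, by simp, hPsperm, ?_, ?_⟩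
    · -- every vertex occurs
      intro v
      have hNpos : 0 < N := by
        rcases Nat.eq_zero_or_pos N with h0 | h
        · exfalso
          have hq0 : qs = [] := List.length_eq_zero_iff.mp (hqlen.trans h0)
          have := hqmem (f v)
          rw [hq0] at this
          simp at this
        · exact h
      refine List.mem_flatten.mpr ⟨P ⟨0, hNpos⟩, ?_, (hPperm ⟨0, hNpos⟩).2 v⟩
      exact List.mem_map_of_mem (List.mem_finRange _)
    · -- adjacency iff alternation
      intro x y hxy
      by_cases hfxy : f x = f y
      · -- same module
        set i := f x with hidef
        have hxi : x ∈ Mod i := hfm x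
        have hyi : y ∈ Mod i := by rw [hfxy]; exact hfm y
        set x' : Mod i := ⟨x, hxi⟩ with hx'def
        set y' : Mod i := ⟨y, hyi⟩ with hy'def
        have hx'y' : x' ≠ y' := fun hc => hxy (congrArg Subtype.val hc)
        have hFsame : ∀ t, (P t).filter (pr x y)
            = ((wfun i t).filter (pr x' y')).map Subtype.val := by
          intro t
          rw [hPdef]
          simp only
          rw [List.filter_flatMap]
          rw [flatMap_single (hqfunperm t).1 ((hqfunperm t).2 i)]
          · rw [hBdef]
            simp only
            rw [List.filter_map]
            congr 1
            apply List.filter_congr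
            intro z _
            simp only [Function.comp_apply, pr]
            apply decide_eq_decide.mpr
            rw [hx'def, hy'def]
            constructor
            · rintro (h | h)
              · exact Or.inl (Subtype.ext h)
              · exact Or.inr (Subtype.ext h)
            · rintro (rfl | rfl)
              · exact Or.inl rfl
              · exact Or.inr rfl
          · intro m _ hmi
            apply List.filter_eq_nil_iff.mpr
            intro z hz hpz
            rcases pr_eq.mp hpz with rfl | rfl
            · exact hmi ((hfuniq z m ((hBmem m t z).mp hz)).symm.trans rfl)
            · exact hmi ((hfuniq z m ((hBmem m t z).mp hz)).symm.trans hfxy.symm)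
        have h1 : ((List.finRange N).map P).map (·.filter (pr x y))
            = (List.finRange N).map (fun t => ((wfun i t).filter (pr x' y')).map Subtype.val) := by
          rw [List.map_map]
          exact List.map_congr_left (fun t _ => hFsame t)
        rw [show G.Adj x y ↔ (G.induce (Mod i)).Adj x' y' by
          rw [hx'def, hy'def]; simp]
        rw [(hwrep i).2 x' y' hx'y']
        rw [altIff hPsperm hxy, h1]
        rw [show (List.finRange N).map (fun t => ((wfun i t).filter (pr x' y')).map Subtype.val)
            = ((List.finRange N).map (fun t => (wfun i t).filter (pr x' y'))).map
              (List.map Subtype.val) from List.map_map.symm]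
        rw [chain'_eq_map_iff _ Subtype.val_injective]
        rw [← map_eq_finRange_map (hwlen i) (wfun i) (hwfun i) (·.filter (pr x' y'))]
        rw [← altIff (hwperm i) hx'y']
      · -- different modules
        set i := f x with hidef
        set j := f y with hjdef
        have hij : i ≠ j := hfxy
        have hxi : x ∈ Mod i := hfm x
        have hyj : y ∈ Mod j := hfm y
        set h : Fin n → V := fun m => if m = i then x else y with hhdef
        have hFcross : ∀ t, (P t).filter (pr x y)
            = ((qfun t).filter (pr i j)).map h := by
          intro t
          rw [hPdef]
          simp only
          rw [List.filter_flatMap]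
          apply flatMap_eq_map_filter
          intro m _
          by_cases hmi : m = i
          · subst hmi
            rw [if_pos (pr_eq.mpr (Or.inl rfl))]
            rw [hhdef]
            simp only [if_pos rfl]
            apply filter_single (hBnd i t) ((hBmem i t x).mpr hxi)
            intro hc
            exact hij (hfuniq y i ((hBmem i t y).mp hc)).symm
          · by_cases hmj : m = j
            · subst hmj
              rw [if_pos (pr_eq.mpr (Or.inr rfl))]
              rw [hhdef]
              simp only [if_neg hmi]
              rw [pr_comm]
              apply filter_single (hBnd j t) ((hBmem j t y).mpr hyj)
              intro hc
              exact hmi (hfuniq x j ((hBmem j t x).mp hc)).symm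
            · rw [if_neg (by simp [pr, hmi, hmj])]
              apply List.filter_eq_nil_iff.mpr
              intro z hz hpz
              rcases pr_eq.mp hpz with rfl | rfl
              · exact hmi ((hfuniq z m ((hBmem m t z).mp hz)).symm.trans rfl)
              · exact hmj ((hfuniq z m ((hBmem m t z).mp hz)).symm.trans rfl)
        have h1 : ((List.finRange N).map P).map (·.filter (pr x y))
            = (List.finRange N).map (fun t => ((qfun t).filter (pr i j)).map h) := by
          rw [List.map_map]
          exact List.map_congr_left (fun t _ => hFcross t)
        have hshape : ∀ l ∈ (List.finRange N).map (fun t => (qfun t).filter (pr i j)),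
            l = [i, j] ∨ l = [j, i] := by
          intro l hl
          obtain ⟨t, _, rfl⟩ := List.mem_map.mp hl
          exact filter_perm (hqfunperm t) hij
        have hhi : h i = x := by rw [hhdef]; simp
        have hhj : h j = y := by rw [hhdef]; simp [Ne.symm hij]
        have hcm : (((List.finRange N).map (fun t => (qfun t).filter (pr i j))).map
              (List.map h)).Chain' (· = ·)
            ↔ ((List.finRange N).map (fun t => (qfun t).filter (pr i j))).Chain' (· = ·) := by
          rw [List.Chain', List.isChain_map]
          apply chain'_congr_mem
          intro u hu v hv
          rcases hshape u hu with rfl | rfl <;> rcases hshape v hv with rfl | rfl <;>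
            simp [hhi, hhj, hxy, Ne.symm hxy, hij, Ne.symm hij]
        rw [hcross i j hij x hxi y hyj]
        rw [hqalt i j hij]
        rw [altIff hPsperm hxy, h1]
        rw [show (List.finRange N).map (fun t => ((qfun t).filter (pr i j)).map h)
            = ((List.finRange N).map (fun t => (qfun t).filter (pr i j))).map
              (List.map h) from List.map_map.symm]
        rw [hcm]
        rw [← map_eq_finRange_map hqlen qfun hqfun (·.filter (pr i j))]
        rw [← altIff hqperm hij]
  · -- lower bound
    rintro m hm
    apply max_le
    · apply hq.2
      exact transfer hrinj
        (fun i j hij => (hcross i j hij (r i) (hr i) (r j) (hr j)).symm) hm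
    · apply Finset.sup_le
      intro i _
      apply (hp i).2
      exact transfer Subtype.val_injective
        (fun x y hxy => by simp) hm
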